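/- There exists a universal constant c > 0 such that for every n ≥ 2: if (U, d_U) is a finite ultrametric space and f : {0, 1, ..., n−1} → U is non-contractive with respect to the metric d(i,j) = |i−j|, then (1/n)·Σ_{x=0}^{n−1} |∇f(x)|_∞ ≥ c·(log n)², where |∇f(x)|_∞ = max_{y ≠ x} d_U(f(x),f(y))/|x−y|. -/

import Mathlib

set_option maxHeartbeats 1000000

open Finset

lemma log_le_four_sqrt_sqrt {x : ℝ} (hx : 1 ≤ x) :
    Real.log x ≤ 4 * Real.sqrt (Real.sqrt x) := by
  have h0 : (0:ℝ) < x := by linarith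
  have h1 : (0:ℝ) < Real.sqrt x := Real.sqrt_pos.mpr h0
  have h2 : (0:ℝ) < Real.sqrt (Real.sqrt x) := Real.sqrt_pos.mpr h1
  have e1 : Real.log x = 2 * Real.log (Real.sqrt x) := by
    rw [Real.log_sqrt h0.le]; ring
  have e2 : Real.log (Real.sqrt x) = 2 * Real.log (Real.sqrt (Real.sqrt x)) := by
    rw [Real.log_sqrt h1.le]; ring
  have := Real.log_le_sub_one_of_pos h2
  nlinarith

lemma sqrt_facts {N : ℝ} (hN1 : 1 ≤ N) :
    (Real.sqrt N)^2 = N ∧ 1 ≤ Real.sqrt N ∧ (Real.log N)^2 ≤ 16 * Real.sqrt N := by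
  have hS2 : (Real.sqrt N)^2 = N := Real.sq_sqrt (by linarith)
  have hS0 : 0 ≤ Real.sqrt N := Real.sqrt_nonneg _
  have hS1 : 1 ≤ Real.sqrt N := by
    rw [show (1:ℝ) = Real.sqrt 1 by simp]
    exact Real.sqrt_le_sqrt hN1
  have hSS2 : (Real.sqrt (Real.sqrt N))^2 = Real.sqrt N := Real.sq_sqrt hS0
  have h4 : Real.log N ≤ 4 * Real.sqrt (Real.sqrt N) := log_le_four_sqrt_sqrt hN1
  have hlnN0 : 0 ≤ Real.log N := Real.log_nonneg hN1
  refine ⟨hS2, hS1, ?_⟩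
  nlinarith [Real.sqrt_nonneg (Real.sqrt N)]

lemma harmonic_lb : ∀ s : ℕ, Real.log ((s:ℝ)+1) ≤ ∑ k ∈ range s, (1:ℝ)/((k:ℝ)+1) := by
  intro s
  induction s with
  | zero => simp
  | succ s ih =>
    rw [Finset.sum_range_succ]
    have key : Real.log ((s:ℝ)+2) - Real.log ((s:ℝ)+1) ≤ 1/((s:ℝ)+1) := by
      rw [← Real.log_div (by positivity) (by positivity)]
      have h := Real.log_le_sub_one_of_pos (x := ((s:ℝ)+2)/((s:ℝ)+1)) (by positivity)
      have e : ((s:ℝ)+2)/((s:ℝ)+1) - 1 = 1/((s:ℝ)+1) := by field_simp; ring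
      linarith [e ▸ h]
    push_cast
    rw [show (s:ℝ)+1+1 = (s:ℝ)+2 by ring]
    linarith [key, ih]

lemma side_real_small {N L : ℝ} (hN2 : 2 ≤ N) (hL1 : 1 ≤ L) (hLS : L ≤ Real.sqrt N) :
    (1/200) * L * (Real.log N)^2 ≤ (N - 1) * Real.log (L+1) := by
  obtain ⟨hS2, hS1, hlnsq⟩ := sqrt_facts (by linarith : (1:ℝ) ≤ N)
  have hlog2 : (1/2:ℝ) ≤ Real.log (L+1) := by
    have h2 : Real.log 2 ≤ Real.log (L+1) := Real.log_le_log (by norm_num) (by linarith)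
    have := Real.log_two_gt_d9
    linarith
  have hln0 : 0 ≤ Real.log N := Real.log_nonneg (by linarith)
  have key : L * (Real.log N)^2 ≤ 16 * N := by nlinarith [Real.sqrt_nonneg N]
  have hmul : (N - 1) * (1/2) ≤ (N - 1) * Real.log (L+1) :=
    mul_le_mul_of_nonneg_left hlog2 (by linarith)
  nlinarith

lemma side_real_big {N s t : ℝ} (hN2 : 2 ≤ N) (hs : 0 ≤ s) (hsS : s ≤ Real.sqrt N)
    (hsq : N ≤ (s+1)^2) (ht1 : 1 ≤ t) (htN : t ≤ N - 1) :
    (1/200) * (s + t) * (Real.log N)^2 ≤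
      (N - 1) * Real.log (s+1) + (1/200) * t * (Real.log t)^2 := by
  obtain ⟨hS2, hS1, hlnsq⟩ := sqrt_facts (by linarith : (1:ℝ) ≤ N)
  have hN0 : (0:ℝ) < N := by linarith
  have hT0 : (0:ℝ) < t := by linarith
  have hln0 : 0 ≤ Real.log N := Real.log_nonneg (by linarith)
  have hlnT0 : 0 ≤ Real.log t := Real.log_nonneg ht1
  have hlnTN : Real.log t ≤ Real.log N := Real.log_le_log hT0 (by linarith)
  have hhalf : Real.log N ≤ 2 * Real.log (s+1) := by
    calc Real.log N ≤ Real.log ((s+1)^2) := Real.log_le_log hN0 hsq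
      _ = 2 * Real.log (s+1) := by
          rw [show ((s+1)^2) = (s+1)^(2:ℕ) by norm_num, Real.log_pow]
          push_cast; ring
  have hSS0 : 0 ≤ Real.sqrt (Real.sqrt N) := Real.sqrt_nonneg _
  have hSS2 : (Real.sqrt (Real.sqrt N))^2 = Real.sqrt N := Real.sq_sqrt (Real.sqrt_nonneg N)
  have hSS1 : Real.sqrt (Real.sqrt N) ≤ Real.sqrt N := by nlinarith
  have h4 : Real.log N ≤ 4 * Real.sqrt (Real.sqrt N) := log_le_four_sqrt_sqrt (by linarith)
  have hA : s * (Real.log N)^2 ≤ 4 * N * (Real.log N) := by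
    have e1 : s * (Real.log N)^2 ≤ Real.sqrt N * (Real.log N)^2 :=
      mul_le_mul_of_nonneg_right hsS (sq_nonneg _)
    have e2 : Real.sqrt N * (Real.log N)^2 ≤
        Real.sqrt N * (Real.log N * (4 * Real.sqrt (Real.sqrt N))) := by
      apply mul_le_mul_of_nonneg_left ?_ (Real.sqrt_nonneg N)
      nlinarith
    have e4 : Real.sqrt N * Real.sqrt (Real.sqrt N) ≤ N := by nlinarith
    have e5 : 4 * Real.log N * (Real.sqrt N * Real.sqrt (Real.sqrt N)) ≤
        4 * Real.log N * N :=
      mul_le_mul_of_nonneg_left e4 (by linarith)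
    nlinarith
  have h5 : t * (Real.log N - Real.log t) ≤ N := by
    have hl := Real.log_le_sub_one_of_pos (show (0:ℝ) < N/t by positivity)
    rw [Real.log_div hN0.ne' hT0.ne'] at hl
    have h6 := mul_le_mul_of_nonneg_left hl hT0.le
    have he : t * (N/t - 1) = N - t := by field_simp
    rw [he] at h6
    linarith
  have hB : t * ((Real.log N)^2 - (Real.log t)^2) ≤ 2 * N * (Real.log N) := by
    nlinarith [mul_nonneg hT0.le (sub_nonneg.mpr hlnTN)]
  have hmul : (N - 1) * (Real.log N / 2) ≤ (N - 1) * Real.log (s+1) :=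
    mul_le_mul_of_nonneg_left (by linarith) (by linarith)
  nlinarith

lemma side_ineq (n L : ℕ) (hn : 2 ≤ n) (hL1 : 1 ≤ L) (hLn : L + 1 ≤ n) :
    (1/200) * (L:ℝ) * (Real.log n)^2 ≤
      ((n:ℝ) - 1) * Real.log (((min L (Nat.sqrt n) : ℕ):ℝ)+1)
      + (1/200) * ((L - min L (Nat.sqrt n) : ℕ):ℝ) *
          (Real.log ((L - min L (Nat.sqrt n) : ℕ):ℝ))^2 := by
  have hN2 : (2:ℝ) ≤ (n:ℝ) := by exact_mod_cast hn
  have hN0 : (0:ℝ) ≤ (n:ℝ) := by linarith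
  have hσS : ((Nat.sqrt n : ℕ):ℝ) ≤ Real.sqrt (n:ℝ) := by
    have h : Nat.sqrt n * Nat.sqrt n ≤ n := Nat.sqrt_le n
    have hc : ((Nat.sqrt n:ℕ):ℝ) * ((Nat.sqrt n:ℕ):ℝ) ≤ (n:ℝ) := by exact_mod_cast h
    nlinarith [Real.sq_sqrt hN0, Real.sqrt_nonneg (n:ℝ),
      Nat.cast_nonneg (α := ℝ) (Nat.sqrt n)]
  rcases le_or_gt L (Nat.sqrt n) with hcase | hcase
  · rw [min_eq_left hcase, Nat.sub_self]
    simp only [Nat.cast_zero, Real.log_zero]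
    have hLS : (L:ℝ) ≤ Real.sqrt (n:ℝ) := le_trans (by exact_mod_cast hcase) hσS
    have := side_real_small hN2 (by exact_mod_cast hL1) hLS
    linarith
  · rw [min_eq_right hcase.le]
    have hsL : Nat.sqrt n ≤ L := hcase.le
    have hsub : ((L - Nat.sqrt n : ℕ):ℝ) = (L:ℝ) - ((Nat.sqrt n : ℕ):ℝ) := by
      push_cast [hsL]; ring
    have hsq : (n:ℝ) ≤ (((Nat.sqrt n : ℕ):ℝ)+1)^2 := by
      have h := Nat.lt_succ_sqrt n
      have : (n:ℝ) < (((Nat.sqrt n:ℕ):ℝ)+1) * (((Nat.sqrt n:ℕ):ℝ)+1) := by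
        exact_mod_cast h
      nlinarith
    have ht1 : (1:ℝ) ≤ ((L - Nat.sqrt n : ℕ):ℝ) := by
      have : 1 ≤ L - Nat.sqrt n := by omega
      exact_mod_cast this
    have htN : ((L - Nat.sqrt n : ℕ):ℝ) ≤ (n:ℝ) - 1 := by
      have h1 : ((L:ℕ):ℝ) + 1 ≤ (n:ℝ) := by exact_mod_cast hLn
      have h2 : (0:ℝ) ≤ ((Nat.sqrt n:ℕ):ℝ) := Nat.cast_nonneg _
      rw [hsub]; linarith
    have := side_real_big hN2 (Nat.cast_nonneg _) hσS hsq ht1 htN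
    have hLe : (L:ℝ) = ((Nat.sqrt n:ℕ):ℝ) + ((L - Nat.sqrt n : ℕ):ℝ) := by
      rw [hsub]; ring
    rw [hLe]
    linarith


section Key
variable {U : Type} (ρ : U → U → ℝ)

theorem key (hnn : ∀ u v, 0 ≤ ρ u v) (hrefl : ∀ u, ρ u u = 0)
    (hsym : ∀ u v, ρ u v = ρ v u)
    (hult : ∀ u v w, ρ u v ≤ max (ρ u w) (ρ w v)) :
    ∀ (n : ℕ) (f : ℕ → U) (G : ℕ → ℝ),
      (∀ x y, x < n → y < n → |(x:ℝ) - (y:ℝ)| ≤ ρ (f x) (f y)) →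
      (∀ x, x < n → 0 ≤ G x) →
      (∀ x y, x < n → y < n → y ≠ x → ρ (f x) (f y) / |(x:ℝ) - (y:ℝ)| ≤ G x) →
      (1/200) * (n:ℝ) * (Real.log n)^2 ≤ ∑ x ∈ Finset.range n, G x := by
  intro n
  induction n using Nat.strong_induction_on with
  | _ n IH =>
  intro f G hnc hG0 hG
  rcases lt_or_ge n 2 with hn2 | hn2
  · interval_cases n
    · simp
    · simpa using hG0 0 (by norm_num)
  -- main case: n ≥ 2
  have hn0 : 0 < n := by omega
  have hnR : (2:ℝ) ≤ (n:ℝ) := by exact_mod_cast hn2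
  -- a pair realizing the diameter
  obtain ⟨pq, hpqmem, hmax⟩ := Finset.exists_max_image
      ((Finset.range n) ×ˢ (Finset.range n)) (fun pr => ρ (f pr.1) (f pr.2))
      ⟨(0,0), by simp [hn0]⟩
  obtain ⟨p, q⟩ := pq
  rw [Finset.mem_product, Finset.mem_range, Finset.mem_range] at hpqmem
  obtain ⟨hp, hq⟩ := hpqmem
  have hDmax : ∀ x y, x < n → y < n → ρ (f x) (f y) ≤ ρ (f p) (f q) := by
    intro x y hx hy
    exact hmax (x, y) (by simp [Finset.mem_product, hx, hy])
  have hDn : (n:ℝ) - 1 ≤ ρ (f p) (f q) := by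
    have h1 := hnc 0 (n-1) (by omega) (by omega)
    have h2 := hDmax 0 (n-1) (by omega) (by omega)
    have h3 : |((0:ℕ):ℝ) - ((n-1:ℕ):ℝ)| = (n:ℝ) - 1 := by
      have hc : ((n-1:ℕ):ℝ) = (n:ℝ) - 1 := by
        push_cast [Nat.cast_sub (by omega : 1 ≤ n)]; ring
      rw [hc, abs_sub_comm]
      push_cast
      rw [abs_of_nonneg (by linarith)]
      ring
    rw [h3] at h1
    linarith
  have hD0 : 0 < ρ (f p) (f q) := by linarith
  -- the two sides
  have hPp : ρ (f p) (f p) < ρ (f p) (f q) := by rw [hrefl]; exact hD0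
  have hPq : ¬ ρ (f q) (f p) < ρ (f p) (f q) := by rw [hsym]; exact lt_irrefl _
  have hsep : ∀ x y, (ρ (f x) (f p) < ρ (f p) (f q)) →
      ¬ (ρ (f y) (f p) < ρ (f p) (f q)) → ρ (f p) (f q) ≤ ρ (f x) (f y) := by
    intro x y hPx hPy
    have h1 : ρ (f p) (f q) ≤ ρ (f y) (f p) := not_lt.mp hPy
    have h2 := hult (f y) (f p) (f x)
    rcases le_max_iff.mp (le_trans h1 h2) with h3 | h3
    · rw [hsym (f x) (f y)]; exact h3
    · exact absurd (lt_of_lt_of_le hPx h3) (lt_irrefl _)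
  have hopp : ∀ x z, ¬ ((ρ (f x) (f p) < ρ (f p) (f q)) ↔
      (ρ (f z) (f p) < ρ (f p) (f q))) → ρ (f p) (f q) ≤ ρ (f x) (f z) := by
    intro x z hne
    by_cases hPx : ρ (f x) (f p) < ρ (f p) (f q)
    · exact hsep x z hPx (by tauto)
    · rw [hsym (f x) (f z)]; exact hsep z x (by tauto) hPx
  -- a crossing
  have hcross : ∃ i, i + 1 < n ∧
      ¬ ((ρ (f i) (f p) < ρ (f p) (f q)) ↔ (ρ (f (i+1)) (f p) < ρ (f p) (f q))) := by
    by_contra hcon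
    push_neg at hcon
    have hall : ∀ x, x < n →
        ((ρ (f x) (f p) < ρ (f p) (f q)) ↔ (ρ (f 0) (f p) < ρ (f p) (f q))) := by
      intro x
      induction x with
      | zero => intro _; tauto
      | succ x ihx =>
        intro hx
        have h1 := hcon x (by omega)
        have h2 := ihx (by omega)
        tauto
    have h1 := hall p hp
    have h2 := hall q hq
    tauto
  obtain ⟨i, hi, hPi⟩ := hcross
  obtain ⟨a, ha⟩ : ∃ a, a = i + 1 := ⟨_, rfl⟩
  obtain ⟨b, hb⟩ : ∃ b, b = n - a := ⟨_, rfl⟩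
  obtain ⟨sL, hsL⟩ : ∃ s, s = min a (Nat.sqrt n) := ⟨_, rfl⟩
  obtain ⟨sR, hsR⟩ : ∃ s, s = min b (Nat.sqrt n) := ⟨_, rfl⟩
  have hσ1 : 1 ≤ Nat.sqrt n := Nat.sqrt_pos.mpr hn0
  have ha1 : 1 ≤ a := by omega
  have han : a < n := by omega
  have hb1 : 1 ≤ b := by omega
  have hbn : b < n := by omega
  have hsL1 : 1 ≤ sL := by omega
  have hsLa : sL ≤ a := by omega
  have hsR1 : 1 ≤ sR := by omega
  have hsRb : sR ≤ b := by omega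
  -- pointwise boundary bounds
  have bdry : ∀ x z, x < n → z < n → z ≠ x →
      ¬ ((ρ (f x) (f p) < ρ (f p) (f q)) ↔ (ρ (f z) (f p) < ρ (f p) (f q))) →
      ∀ m : ℕ, (if x ≤ z then z - x else x - z) ≤ m →
      ((n:ℝ) - 1) / (m:ℝ) ≤ G x := by
    intro x z hx hz hzx hne m hm
    have hd := hopp x z hne
    have h1 : 1 ≤ (if x ≤ z then z - x else x - z) := by
      split <;> omega
    have hm1 : 1 ≤ m := le_trans h1 hm
    have habs : |(x:ℝ) - (z:ℝ)| = ((if x ≤ z then z - x else x - z : ℕ):ℝ) := by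
      split
      · rw [abs_sub_comm, abs_of_nonneg]
        · push_cast [Nat.cast_sub (by assumption : x ≤ z)]; ring
        · simp only [sub_nonneg]
          exact_mod_cast (by assumption : x ≤ z)
      · rw [abs_of_nonneg]
        · push_cast [Nat.cast_sub (by omega : z ≤ x)]; ring
        · simp only [sub_nonneg]
          exact_mod_cast (by omega : z ≤ x)
    have hG1 := hG x z hx hz hzx
    rw [habs] at hG1
    have hdnn : (0:ℝ) < ((if x ≤ z then z - x else x - z : ℕ):ℝ) := by
      exact_mod_cast h1
    have hmnn : (0:ℝ) < (m:ℝ) := by exact_mod_cast hm1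
    calc ((n:ℝ) - 1) / (m:ℝ)
        ≤ ((n:ℝ) - 1) / ((if x ≤ z then z - x else x - z : ℕ):ℝ) := by
          apply div_le_div_of_nonneg_left (by linarith) hdnn
          exact_mod_cast hm
      _ ≤ ρ (f x) (f z) / ((if x ≤ z then z - x else x - z : ℕ):ℝ) := by
          apply (div_le_div_iff_of_pos_right hdnn).mpr
          linarith
      _ ≤ G x := hG1
  have hleft : ∀ x, a - sL ≤ x → x < a → ((n:ℝ)-1) / ((a - x : ℕ):ℝ) ≤ G x := by
    intro x hx1 hx2
    by_cases hc : (ρ (f x) (f p) < ρ (f p) (f q)) ↔ (ρ (f i) (f p) < ρ (f p) (f q))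
    · exact bdry x (i+1) (by omega) (by omega) (by omega) (by tauto) (a - x)
        (by split <;> omega)
    · have hxi : x < i := by
        rcases Nat.lt_or_ge x i with h | h
        · exact h
        · have : x = i := by omega
          subst this; tauto
      exact bdry x i (by omega) (by omega) (by omega) hc (a - x) (by split <;> omega)
  have hright : ∀ x, a ≤ x → x < a + sR → ((n:ℝ)-1) / ((x + 1 - a : ℕ):ℝ) ≤ G x := by
    intro x hx1 hx2
    by_cases hc : (ρ (f x) (f p) < ρ (f p) (f q)) ↔ (ρ (f (i+1)) (f p) < ρ (f p) (f q))
    · exact bdry x i (by omega) (by omega) (by omega) (by tauto) (x + 1 - a)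
        (by split <;> omega)
    · have hxi : x ≠ i + 1 := by
        intro h; rw [h] at hc; exact hc Iff.rfl
      exact bdry x (i+1) (by omega) (by omega) (by omega) hc (x + 1 - a)
        (by split <;> omega)
  -- sum splitting
  have hsplit : ∑ x ∈ range n, G x =
      (∑ x ∈ Ico 0 (a - sL), G x) + (∑ x ∈ Ico (a - sL) a, G x)
      + (∑ x ∈ Ico a (a + sR), G x) + (∑ x ∈ Ico (a + sR) n, G x) := by
    rw [range_eq_Ico,
      ← Finset.sum_Ico_consecutive G (by omega : 0 ≤ a + sR) (by omega : a + sR ≤ n),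
      ← Finset.sum_Ico_consecutive G (by omega : 0 ≤ a) (by omega : a ≤ a + sR),
      ← Finset.sum_Ico_consecutive G (by omega : 0 ≤ a - sL) (by omega : a - sL ≤ a)]
  -- left recursion
  have hB1 : (1/200) * ((a - sL : ℕ):ℝ) * (Real.log ((a - sL:ℕ):ℝ))^2
      ≤ ∑ x ∈ Ico 0 (a - sL), G x := by
    rw [← Finset.range_eq_Ico]
    exact IH (a - sL) (by omega) f G (fun x y hx hy => hnc x y (by omega) (by omega))
      (fun x hx => hG0 x (by omega)) (fun x y hx hy hyx => hG x y (by omega) (by omega) hyx)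
  -- left boundary
  have hB2 : ((n:ℝ) - 1) * Real.log ((sL:ℝ)+1) ≤ ∑ x ∈ Ico (a - sL) a, G x := by
    have e0 : ∑ x ∈ Ico (a - sL) a, ((n:ℝ)-1) / ((a - x:ℕ):ℝ)
        ≤ ∑ x ∈ Ico (a - sL) a, G x := by
      apply Finset.sum_le_sum
      intro x hx
      rw [Finset.mem_Ico] at hx
      exact hleft x hx.1 hx.2
    have e1 : ∑ x ∈ Ico (a - sL) a, ((n:ℝ)-1) / ((a - x:ℕ):ℝ)
        = ∑ k ∈ range sL, ((n:ℝ)-1) / ((sL - k:ℕ):ℝ) := by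
      rw [Finset.sum_Ico_eq_sum_range, (by omega : a - (a - sL) = sL)]
      apply Finset.sum_congr rfl
      intro k hk
      rw [Finset.mem_range] at hk
      rw [(by omega : a - (a - sL + k) = sL - k)]
    have e2 : ∑ k ∈ range sL, ((n:ℝ)-1) / ((sL - k:ℕ):ℝ)
        = ∑ k ∈ range sL, ((n:ℝ)-1) / ((k+1:ℕ):ℝ) := by
      rw [← Finset.sum_range_reflect (fun j => ((n:ℝ)-1)/((j+1:ℕ):ℝ)) sL]
      apply Finset.sum_congr rfl
      intro k hk
      rw [Finset.mem_range] at hk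
      show ((n:ℝ)-1)/((sL-k:ℕ):ℝ) = ((n:ℝ)-1)/((sL-1-k+1:ℕ):ℝ)
      rw [(by omega : sL - 1 - k + 1 = sL - k)]
    have e3 : ∑ k ∈ range sL, ((n:ℝ)-1) / ((k+1:ℕ):ℝ)
        = ((n:ℝ)-1) * ∑ k ∈ range sL, (1:ℝ)/((k:ℝ)+1) := by
      rw [Finset.mul_sum]
      apply Finset.sum_congr rfl
      intro k hk
      push_cast
      ring
    have e5 : ((n:ℝ)-1) * Real.log ((sL:ℝ)+1)
        ≤ ((n:ℝ)-1) * ∑ k ∈ range sL, (1:ℝ)/((k:ℝ)+1) :=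
      mul_le_mul_of_nonneg_left (harmonic_lb sL) (by linarith)
    rw [← e3, ← e2, ← e1] at e5
    linarith
  -- right boundary
  have hB3 : ((n:ℝ) - 1) * Real.log ((sR:ℝ)+1) ≤ ∑ x ∈ Ico a (a + sR), G x := by
    have e0 : ∑ x ∈ Ico a (a + sR), ((n:ℝ)-1) / ((x + 1 - a:ℕ):ℝ)
        ≤ ∑ x ∈ Ico a (a + sR), G x := by
      apply Finset.sum_le_sum
      intro x hx
      rw [Finset.mem_Ico] at hx
      exact hright x hx.1 hx.2
    have e1 : ∑ x ∈ Ico a (a + sR), ((n:ℝ)-1) / ((x + 1 - a:ℕ):ℝ)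
        = ∑ k ∈ range sR, ((n:ℝ)-1) / ((k+1:ℕ):ℝ) := by
      rw [Finset.sum_Ico_eq_sum_range, (by omega : a + sR - a = sR)]
      apply Finset.sum_congr rfl
      intro k hk
      rw [Finset.mem_range] at hk
      rw [(by omega : a + k + 1 - a = k + 1)]
    have e3 : ∑ k ∈ range sR, ((n:ℝ)-1) / ((k+1:ℕ):ℝ)
        = ((n:ℝ)-1) * ∑ k ∈ range sR, (1:ℝ)/((k:ℝ)+1) := by
      rw [Finset.mul_sum]
      apply Finset.sum_congr rfl
      intro k hk
      push_cast
      ring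
    have e5 : ((n:ℝ)-1) * Real.log ((sR:ℝ)+1)
        ≤ ((n:ℝ)-1) * ∑ k ∈ range sR, (1:ℝ)/((k:ℝ)+1) :=
      mul_le_mul_of_nonneg_left (harmonic_lb sR) (by linarith)
    rw [← e3, ← e1] at e5
    linarith
  -- right recursion
  have hB4 : (1/200) * ((b - sR:ℕ):ℝ) * (Real.log ((b - sR:ℕ):ℝ))^2
      ≤ ∑ x ∈ Ico (a + sR) n, G x := by
    rw [Finset.sum_Ico_eq_sum_range, (by omega : n - (a + sR) = b - sR)]
    exact IH (b - sR) (by omega) (fun x => f (a + sR + x)) (fun x => G (a + sR + x))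
      (fun x y hx hy => by
        have h := hnc (a + sR + x) (a + sR + y) (by omega) (by omega)
        have he : |((a + sR + x:ℕ):ℝ) - ((a + sR + y:ℕ):ℝ)| = |(x:ℝ) - (y:ℝ)| := by
          push_cast
          ring_nf
        rw [← he]
        exact h)
      (fun x hx => hG0 _ (by omega))
      (fun x y hx hy hyx => by
        have h := hG (a + sR + x) (a + sR + y) (by omega) (by omega) (by omega)
        have he : |((a + sR + x:ℕ):ℝ) - ((a + sR + y:ℕ):ℝ)| = |(x:ℝ) - (y:ℝ)| := by
          push_cast
          ring_nf
        rw [he] at h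
        exact h)
  -- combine
  have hside_a := side_ineq n a hn2 ha1 (by omega)
  have hside_b := side_ineq n b hn2 hb1 (by omega)
  rw [← hsL] at hside_a
  rw [← hsR] at hside_b
  have hsum : (1/200:ℝ) * (n:ℝ) * (Real.log n)^2
      = (1/200) * (a:ℝ) * (Real.log n)^2 + (1/200) * (b:ℝ) * (Real.log n)^2 := by
    have h : (n:ℝ) = (a:ℝ) + (b:ℝ) := by exact_mod_cast (by omega : n = a + b)
    linear_combination (1/200) * (Real.log (n:ℝ))^2 * h
  rw [hsplit, hsum]
  linarith [hB1, hB2, hB3, hB4, hside_a, hside_b]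

end Key



/-- `d` is a metric on `X`. -/
def IsMetric {X : Type*} (d : X → X → ℝ) : Prop :=
  (∀ x y, 0 ≤ d x y) ∧ (∀ x y, d x y = 0 ↔ x = y) ∧
  (∀ x y, d x y = d y x) ∧ (∀ x y z, d x z ≤ d x y + d y z)

/-- `ρ` is an ultrametric. -/
def IsUltrametric {X : Type*} (ρ : X → X → ℝ) : Prop :=
  ∀ u v w, ρ u v ≤ max (ρ u w) (ρ w v)

/-- There is a universal `c > 0` such that for every `n ≥ 2`, every non-contractive map
of the path `{0,…,n−1}` (with metric `|i−j|`) into a finite ultrametric space satisfies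
`(1/n) ∑_x |∇f(x)|_∞ ≥ c (log n)²`. -/
theorem path_ultrametric_gradient_average_lower_bound :
    ∃ c : ℝ, 0 < c ∧
      ∀ (n : ℕ), 2 ≤ n →
        ∀ (U : Type), Finite U →
          ∀ (dU : U → U → ℝ), IsMetric dU → IsUltrametric dU →
            ∀ f : Fin n → U,
              (∀ a b : Fin n, |(a : ℝ) - (b : ℝ)| ≤ dU (f a) (f b)) →
              c * (Real.log n) ^ 2 ≤
                (1 / (n : ℝ)) * ∑ x : Fin n,
                  (⨆ y : {y : Fin n // y ≠ x},
                    dU (f x) (f y.1) / |(x : ℝ) - (y.1 : ℝ)|) := by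
  refine ⟨1/200, by norm_num, ?_⟩
  intro n hn U _ dU hmet hultra f hf
  obtain ⟨hnn, heqv, hsymm, _⟩ := hmet
  have hn0 : 0 < n := by omega
  have hrefl : ∀ u, dU u u = 0 := fun u => (heqv u u).mpr rfl
  have hbdd : ∀ x : Fin n, BddAbove (Set.range fun y : {y : Fin n // y ≠ x} =>
      dU (f x) (f y.1) / |(x : ℝ) - (y.1 : ℝ)|) :=
    fun x => Set.Finite.bddAbove (Set.finite_range _)
  have hkey := key dU hnn hrefl hsymm hultra n
    (fun k => f ⟨k % n, Nat.mod_lt _ hn0⟩)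
    (fun k => if h : k < n then
      (⨆ y : {y : Fin n // y ≠ (⟨k, h⟩ : Fin n)},
        dU (f ⟨k, h⟩) (f y.1) / |((k:ℕ):ℝ) - ((y.1 : Fin n):ℝ)|) else 0)
    ?_ ?_ ?_
  · -- conclude
    have hsum : ∑ x ∈ Finset.range n, (fun k => if h : k < n then
        (⨆ y : {y : Fin n // y ≠ (⟨k, h⟩ : Fin n)},
          dU (f ⟨k, h⟩) (f y.1) / |((k:ℕ):ℝ) - ((y.1 : Fin n):ℝ)|) else 0) x
        = ∑ x : Fin n, (⨆ y : {y : Fin n // y ≠ x},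
            dU (f x) (f y.1) / |(x : ℝ) - (y.1 : ℝ)|) := by
      rw [← Fin.sum_univ_eq_sum_range]
      apply Finset.sum_congr rfl
      intro x _
      rw [dif_pos x.isLt]
    rw [hsum] at hkey
    have hn0R : (0:ℝ) < (n:ℝ) := by exact_mod_cast hn0
    have h2 := mul_le_mul_of_nonneg_left hkey (by positivity : (0:ℝ) ≤ 1/(n:ℝ))
    have e : (1/(n:ℝ)) * ((1/200) * (n:ℝ) * (Real.log n)^2)
        = (1/200) * (Real.log n)^2 := by
      field_simp
    rw [e] at h2
    exact h2
  · -- non-contractive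
    intro x y hx hy
    have h := hf ⟨x, hx⟩ ⟨y, hy⟩
    have ex : (⟨x % n, Nat.mod_lt _ hn0⟩ : Fin n) = ⟨x, hx⟩ := by
      ext; simp [Nat.mod_eq_of_lt hx]
    have ey : (⟨y % n, Nat.mod_lt _ hn0⟩ : Fin n) = ⟨y, hy⟩ := by
      ext; simp [Nat.mod_eq_of_lt hy]
    simp only [ex, ey]
    exact_mod_cast h
  · -- nonnegativity of the gradient
    intro x hx
    beta_reduce
    rw [dif_pos hx]
    obtain ⟨y, hy⟩ := Fintype.exists_ne_of_one_lt_card (by simp; omega) (⟨x, hx⟩ : Fin n)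
    have h0 : (0:ℝ) ≤ dU (f ⟨x, hx⟩) (f y) / |((x:ℕ):ℝ) - ((y : Fin n):ℝ)| :=
      div_nonneg (hnn _ _) (abs_nonneg _)
    exact le_trans h0 (le_ciSup (hbdd ⟨x, hx⟩) ⟨y, hy⟩)
  · -- each ratio is at most the gradient
    intro x y hx hy hyx
    beta_reduce
    rw [dif_pos hx]
    have ex : (⟨x % n, Nat.mod_lt _ hn0⟩ : Fin n) = ⟨x, hx⟩ := by
      ext; simp [Nat.mod_eq_of_lt hx]
    have ey : (⟨y % n, Nat.mod_lt _ hn0⟩ : Fin n) = ⟨y, hy⟩ := by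
      ext; simp [Nat.mod_eq_of_lt hy]
    simp only [ex, ey]
    have hne : (⟨y, hy⟩ : Fin n) ≠ ⟨x, hx⟩ := by
      intro h
      exact hyx (by simpa using congrArg Fin.val h)
    exact le_ciSup (hbdd ⟨x, hx⟩) (⟨⟨y, hy⟩, hne⟩ : {z : Fin n // z ≠ (⟨x, hx⟩ : Fin n)})
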